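/- Let M be a q×p integer matrix, Γ the graph on ℕ^q with edges given by ± columns of M, and define a relation on bounded M-subgraphs by Γ(u) ≤ Γ(u') iff there exist v ∈ Γ(u), v' ∈ Γ(u') with v ≤ v' coordinatewise. Then this relation is reflexive and has the property: if Γ(u) ≤ Γ(u'), then for every v ∈ Γ(u) there exists v' ∈ Γ(u') with v ≤ v' coordinatewise. -/

import Mathlib

/-- Two vertices `u, u' ∈ ℕ^q` are adjacent in the graph `Γ` iff `u - u'` or
`u' - u` is a column of `M`. -/
def MAdj (q p : ℕ) (M : Matrix (Fin q) (Fin p) ℤ) (u u' : Fin q → ℕ) : Prop :=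
  ∃ j : Fin p,
    ((fun i => (u i : ℤ) - (u' i : ℤ)) = fun i => M i j) ∨
    ((fun i => (u' i : ℤ) - (u i : ℤ)) = fun i => M i j)

/-- The `M`-subgraph (connected component of `Γ`) containing `u`. -/
def MComp (q p : ℕ) (M : Matrix (Fin q) (Fin p) ℤ) (u : Fin q → ℕ) :
    Set (Fin q → ℕ) :=
  {w | Relation.ReflTransGen (MAdj q p M) u w}

lemma MAdj.symm' {q p : ℕ} {M : Matrix (Fin q) (Fin p) ℤ} {a b : Fin q → ℕ}
    (h : MAdj q p M a b) : MAdj q p M b a := by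
  obtain ⟨j, hj | hj⟩ := h
  · exact ⟨j, Or.inr hj⟩
  · exact ⟨j, Or.inl hj⟩

lemma madj_lift {q p : ℕ} {M : Matrix (Fin q) (Fin p) ℤ} {b c b' : Fin q → ℕ}
    (hbc : MAdj q p M b c) (hle : b ≤ b') :
    MAdj q p M b' (fun i => b' i + c i - b i) ∧ c ≤ fun i => b' i + c i - b i := by
  have hsub : ∀ i, b i ≤ b' i + c i := fun i => le_trans (hle i) (Nat.le_add_right _ _)
  have hcast : ∀ i, ((b' i + c i - b i : ℕ) : ℤ) = (b' i : ℤ) + c i - b i := by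
    intro i
    have := hsub i
    push_cast [Nat.cast_sub this]
    ring
  constructor
  · obtain ⟨j, hj | hj⟩ := hbc
    · refine ⟨j, Or.inl ?_⟩
      funext i
      have := congrFun hj i
      simp only at this ⊢
      rw [hcast i]
      linarith
    · refine ⟨j, Or.inr ?_⟩
      funext i
      have := congrFun hj i
      simp only at this ⊢
      rw [hcast i]
      linarith
  · intro i
    show c i ≤ b' i + c i - b i
    have h2 : b i + c i - b i ≤ b' i + c i - b i :=
      Nat.sub_le_sub_right (Nat.add_le_add_right (hle i) (c i)) (b i)
    rwa [Nat.add_sub_cancel_left] at h2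

lemma key_lift {q p : ℕ} {M : Matrix (Fin q) (Fin p) ℤ} {a b a' : Fin q → ℕ}
    (h : Relation.ReflTransGen (MAdj q p M) a b) (hle : a ≤ a') :
    ∃ b', Relation.ReflTransGen (MAdj q p M) a' b' ∧ b ≤ b' := by
  induction h with
  | refl => exact ⟨a', Relation.ReflTransGen.refl, hle⟩
  | tail _ hbc ih =>
    obtain ⟨b', hb', hleb⟩ := ih
    obtain ⟨hadj, hlec⟩ := madj_lift hbc hleb
    exact ⟨_, hb'.tail hadj, hlec⟩

lemma mcomp_symm {q p : ℕ} {M : Matrix (Fin q) (Fin p) ℤ} {a b : Fin q → ℕ}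
    (h : Relation.ReflTransGen (MAdj q p M) a b) :
    Relation.ReflTransGen (MAdj q p M) b a :=
  (@Relation.ReflTransGen.stdSymm _ _ ⟨fun _ _ => MAdj.symm'⟩).symm _ _ h

/-- On bounded `M`-subgraphs, the relation `Γ(u) ≤ Γ(u')` ⟺ some `v ∈ Γ(u)` is
coordinatewise below some `v' ∈ Γ(u')` is reflexive, and has the property that
if `Γ(u) ≤ Γ(u')` then **every** `v ∈ Γ(u)` is below some `v' ∈ Γ(u')`. -/
theorem msubgraph_order (q p : ℕ) (M : Matrix (Fin q) (Fin p) ℤ)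
    (u u' : Fin q → ℕ)
    (hb : (MComp q p M u).Finite) (hb' : (MComp q p M u').Finite) :
    (∃ v ∈ MComp q p M u, ∃ v' ∈ MComp q p M u, v ≤ v') ∧
    ((∃ v ∈ MComp q p M u, ∃ v' ∈ MComp q p M u', v ≤ v') →
      ∀ v ∈ MComp q p M u, ∃ v' ∈ MComp q p M u', v ≤ v') := by
  constructor
  · exact ⟨u, Relation.ReflTransGen.refl, u, Relation.ReflTransGen.refl, le_refl u⟩
  · rintro ⟨v₀, hv₀, v₀', hv₀', hle⟩ v hv
    have hpath : Relation.ReflTransGen (MAdj q p M) v₀ v :=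
      (mcomp_symm hv₀).trans hv
    obtain ⟨v', hv', hlev⟩ := key_lift hpath hle
    exact ⟨v', hv₀'.trans hv', hlev⟩
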